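/- Let p > 2 and let φ : [0,∞) → [p-2,∞) be defined implicitly by p(1-1/p)^{p-1}(1+φ(s))^{p-2}(φ(s)-p+2) = s. Then φ is differentiable on (0,∞) and φ'(s) = (1+φ(s))(φ(s)-p+2) / ((p-1)s(φ(s)-p+3)) for all s > 0. -/

import Mathlib

open Set Real

theorem stmt_5 (p : ℝ) (hp : 2 < p) (φ : ℝ → ℝ)
    (hφ0 : ∀ s, 0 ≤ s → p - 2 ≤ φ s)
    (hφ : ∀ s, 0 ≤ s →
      p * (1 - 1 / p) ^ (p - 1) * (1 + φ s) ^ (p - 2) * (φ s - p + 2) = s) :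
    ∀ s, 0 < s →
      HasDerivAt φ ((1 + φ s) * (φ s - p + 2) / ((p - 1) * s * (φ s - p + 3))) s := by
  have hp0 : (0:ℝ) < p := by linarith
  obtain ⟨C, hC, hφ⟩ : ∃ C : ℝ, 0 < C ∧ ∀ s, 0 ≤ s →
      C * (1 + φ s) ^ (p - 2) * (φ s - p + 2) = s := by
    refine ⟨p * (1 - 1/p) ^ (p - 1), ?_, fun s hs => by linear_combination hφ s hs⟩
    apply mul_pos hp0
    apply Real.rpow_pos_of_pos
    have : 1/p < 1 := by rw [div_lt_one hp0]; linarith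
    linarith
  set F : ℝ → ℝ := fun x => C * (1 + x) ^ (p - 2) * (x - p + 2) with hFdef
  have hFφ : ∀ s, 0 ≤ s → F (φ s) = s := hφ
  -- F is strictly monotone on Ici (p-2)
  have hbase : ∀ x : ℝ, p - 2 ≤ x → (0:ℝ) < 1 + x := fun x hx => by linarith
  have hFmono : StrictMonoOn F (Ici (p - 2)) := by
    intro a ha b hb hab
    simp only [mem_Ici] at ha hb
    have hA : (0:ℝ) < (1 + a) ^ (p - 2) := Real.rpow_pos_of_pos (hbase a ha) _
    have hAB : (1 + a) ^ (p - 2) ≤ (1 + b) ^ (p - 2) :=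
      Real.rpow_le_rpow (hbase a ha).le (by linarith) (by linarith)
    have h1 : C * (1 + a) ^ (p - 2) * (a - p + 2) < C * (1 + a) ^ (p - 2) * (b - p + 2) := by
      apply mul_lt_mul_of_pos_left (by linarith) (mul_pos hC hA)
    have h2 : C * (1 + a) ^ (p - 2) * (b - p + 2) ≤ C * (1 + b) ^ (p - 2) * (b - p + 2) := by
      apply mul_le_mul_of_nonneg_right _ (by linarith)
      exact mul_le_mul_of_nonneg_left hAB hC.le
    exact lt_of_lt_of_le h1 h2
  have hFx_nonneg : ∀ x : ℝ, p - 2 ≤ x → 0 ≤ F x := by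
    intro x hx
    apply mul_nonneg (mul_nonneg hC.le (Real.rpow_pos_of_pos (hbase x hx) _).le) (by linarith)
  -- φ is strictly monotone on Ici 0
  have hφmono : StrictMonoOn φ (Ici (0:ℝ)) := by
    intro a ha b hb hab
    simp only [mem_Ici] at ha hb
    have := hFmono.lt_iff_lt (mem_Ici.2 (hφ0 a ha)) (mem_Ici.2 (hφ0 b hb))
    rw [← this, hFφ a ha, hFφ b hb]; exact hab
  -- φ '' Ioi 0 ⊇ Ioi (p-2)
  have hsurj : Ioi (p - 2) ⊆ φ '' Ioi 0 := by
    intro x hx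
    simp only [mem_Ioi] at hx
    have hFx : 0 < F x := by
      apply mul_pos (mul_pos hC (Real.rpow_pos_of_pos (by linarith) _)) (by linarith)
    refine ⟨F x, hFx, ?_⟩
    have h1 : F (φ (F x)) = F x := hFφ _ hFx.le
    exact hFmono.injOn (mem_Ici.2 (hφ0 _ hFx.le)) (mem_Ici.2 hx.le) h1
  intro s hs
  have hs' : 0 ≤ s := hs.le
  set x := φ s with hxdef
  have hx0 : p - 2 ≤ x := hφ0 s hs'
  have hxs : F x = s := hFφ s hs'
  have hx1 : (0:ℝ) < 1 + x := hbase x hx0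
  have hxpos : 0 < x - p + 2 := by
    by_contra h
    push_neg at h
    have : F x ≤ 0 := mul_nonpos_of_nonneg_of_nonpos
      (mul_nonneg hC.le (Real.rpow_pos_of_pos hx1 _).le) h
    linarith [hxs ▸ this, hs]
  have hxgt : p - 2 < x := by linarith
  -- continuity of φ at s
  have hcont : ContinuousAt φ s := by
    apply hφmono.continuousAt_of_image_mem_nhds (Ici_mem_nhds hs)
    apply Filter.mem_of_superset (Ioi_mem_nhds hxgt)
    exact hsurj.trans (image_mono (f := φ) Ioi_subset_Ici_self)
  -- derivative of F at x
  have hpow : HasDerivAt (fun y : ℝ => (1 + y) ^ (p - 2)) ((p - 2) * (1 + x) ^ (p - 3)) x := by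
    have h1 : HasDerivAt (fun y : ℝ => 1 + y) 1 x := (hasDerivAt_id x).const_add 1
    have h2 : HasDerivAt (fun z : ℝ => z ^ (p - 2)) ((p - 2) * (1 + x) ^ (p - 2 - 1)) (1 + x) :=
      Real.hasDerivAt_rpow_const (Or.inl hx1.ne')
    have := h2.comp x h1
    simpa [Function.comp_def, show p - 2 - 1 = p - 3 by ring] using this
  have hFderiv : HasDerivAt F
      (C * ((p - 2) * (1 + x) ^ (p - 3)) * (x - p + 2) + C * (1 + x) ^ (p - 2) * 1) x := by
    have h3 : HasDerivAt (fun y : ℝ => C * (1 + y) ^ (p - 2)) (C * ((p - 2) * (1 + x) ^ (p - 3))) x :=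
      hpow.const_mul C
    have h4 : HasDerivAt (fun y : ℝ => y - p + 2) 1 x := by
      simpa using ((hasDerivAt_id x).sub_const p).add_const 2
    exact h3.mul h4
  have hpow32 : (1 + x) ^ (p - 2) = (1 + x) ^ (p - 3) * (1 + x) := by
    rw [← Real.rpow_add_one hx1.ne' (p - 3)]; ring_nf
  set D : ℝ := C * ((p - 2) * (1 + x) ^ (p - 3)) * (x - p + 2) + C * (1 + x) ^ (p - 2) * 1 with hD
  have hp3 : (0:ℝ) < (1 + x) ^ (p - 3) := Real.rpow_pos_of_pos hx1 _
  have hDval : D = C * (1 + x) ^ (p - 3) * ((p - 1) * (x - p + 3)) := by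
    rw [hD, hpow32]; ring
  have hDne : D ≠ 0 := by
    rw [hDval]
    have : (0:ℝ) < (p - 1) * (x - p + 3) := mul_pos (by linarith) (by linarith)
    exact (mul_pos (mul_pos hC hp3) this).ne'
  have hmain : HasDerivAt φ D⁻¹ s := by
    apply HasDerivAt.of_local_left_inverse hcont _ hDne
    · filter_upwards [eventually_ge_nhds hs] with y hy using hFφ y hy
    · exact hxdef ▸ hFderiv
  have hs_eq : s = C * (1 + x) ^ (p - 3) * (1 + x) * (x - p + 2) := by
    rw [← hxs]; show C * (1 + x) ^ (p - 2) * (x - p + 2) = _; rw [hpow32]; ring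
  have heq : D⁻¹ = (1 + x) * (x - p + 2) / ((p - 1) * s * (x - p + 3)) := by
    have h1 : (C * (1 + x) ^ (p - 3) * ((p - 1) * (x - p + 3))) *
        ((1 + x) * (x - p + 2) / ((p - 1) * s * (x - p + 3))) = 1 := by
      rw [hs_eq]
      have h2 : p - 1 ≠ 0 := by linarith
      have h3 : x - p + 3 ≠ 0 := by linarith
      have h4 : x - p + 2 ≠ 0 := hxpos.ne'
      have h5 : (1 + x) ≠ 0 := hx1.ne'
      field_simp
    rw [hDval]
    exact inv_eq_of_mul_eq_one_right h1
  rw [← heq]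
  exact hmain
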